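/- Interpretation of the 2SLS estimands under one-sided noncompliance: suppose β₀, β₁, β₂, β₃ ∈ ℝ satisfy, for every (z,z') ∈ {0,1}², E[Y | Z_i=z, Z_j=z'] = β₀ + β₁·E[D_i | Z_i=z, Z_j=z'] + β₂·E[D_j | Z_i=z, Z_j=z'] + β₃·E[D_i·D_j | Z_i=z, Z_j=z'] (the population moment conditions of the 2SLS regression of Y on (D_i, D_j, D_i·D_j) with instruments (Z_i, Z_j, Z_i·Z_j)). Then under Assumptions 1, 2 and 4, if P[C_i] > 0 and P[C_j] > 0, it holds that β₀ = E[Y(0,0)], β₁ = E[Y(1,0) − Y(0,0) | C_i], and β₂ = E[Y(0,1) − Y(0,0) | C_j]. -/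

import Mathlib

open MeasureTheory ProbabilityTheory

noncomputable def bInd (b : Bool) : ℝ := if b then 1 else 0

@[fun_prop]
lemma measurable_bInd : Measurable bInd := measurable_of_countable _

lemma cond_integral_eq_of_indep {Ω : Type*} [MeasurableSpace Ω] {P : Measure Ω}
    [IsProbabilityMeasure P] {A : Set Ω} (hA : MeasurableSet A) (hA0 : P A ≠ 0)
    {F : Ω → ℝ} (hF : Integrable F P)
    (hind : IndepFun F (A.indicator (fun _ => (1:ℝ))) P) :
    ∫ ω, F ω ∂(P[|A]) = ∫ ω, F ω ∂P := by
  have hI : Integrable (A.indicator (fun _ => (1:ℝ))) P := (integrable_const 1).indicator hA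
  have hmul := hind.integral_mul_eq_mul_integral hF.1 hI.1
  have h1 : ∫ ω, A.indicator (fun _ => (1:ℝ)) ω ∂P = (P A).toReal := by
    simpa [Measure.real_def] using integral_indicator_const (1:ℝ) hA
  have h2 : (fun ω => (F * A.indicator (fun _ => (1:ℝ))) ω) = A.indicator F := by
    funext ω
    by_cases h : ω ∈ A <;> simp [h]
  have hmul' : ∫ ω, A.indicator F ω ∂P = (∫ ω, F ω ∂P) * (P A).toReal := by
    rw [← h1, ← h2]; exact hmul
  have hT : (P A).toReal ≠ 0 := by
    simp [ENNReal.toReal_ne_zero, hA0, measure_ne_top P A]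
  rw [ProbabilityTheory.cond, integral_smul_measure, ← integral_indicator hA, hmul',
    ENNReal.toReal_inv, smul_eq_mul]
  field_simp

theorem stmt_13
    {Ω : Type*} [MeasurableSpace Ω] (P : Measure Ω) [IsProbabilityMeasure P]
    (Y : Bool → Bool → Ω → ℝ) (Di Dj : Bool → Bool → Ω → Bool)
    (Zi Zj : Ω → Bool)
    (hYmeas : ∀ d d', Measurable (Y d d'))
    (hYint : ∀ d d', Integrable (Y d d') P)
    (hDimeas : ∀ z z', Measurable (Di z z'))
    (hDjmeas : ∀ z z', Measurable (Dj z z'))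
    (hZi : Measurable Zi) (hZj : Measurable Zj)
    (hpos : ∀ z z', 0 < P ({x | Zi x = z} ∩ {x | Zj x = z'}))
    (hIV : IndepFun
      (fun ω => ((fun d d' => Y d d' ω),
                 (fun z z' => Di z z' ω),
                 (fun z z' => Dj z z' ω)))
      (fun ω => (Zi ω, Zj ω)) P)
    (hmono : ∀ᵐ ω ∂P,
      (Di false false ω ≤ Di false true ω ∧ Di false true ω ≤ Di true false ω ∧
        Di true false ω ≤ Di true true ω) ∧
      (Dj false false ω ≤ Dj false true ω ∧ Dj false true ω ≤ Dj true false ω ∧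
        Dj true false ω ≤ Dj true true ω))
    (hosn : ∀ᵐ ω ∂P,
      Di false false ω = false ∧ Di false true ω = false ∧
      Dj false false ω = false ∧ Dj false true ω = false)
    (b0 b1 b2 b3 : ℝ)
    (h2sls : ∀ z z', (∫ ω, (Y (Di (Zi ω) (Zj ω) ω) (Dj (Zj ω) (Zi ω) ω) ω) ∂(P[|({x | Zi x = z} ∩ {x | Zj x = z'})])) = b0 + b1 * (∫ ω, bInd (Di (Zi ω) (Zj ω) ω) ∂(P[|({x | Zi x = z} ∩ {x | Zj x = z'})])) + b2 * (∫ ω, bInd (Dj (Zj ω) (Zi ω) ω) ∂(P[|({x | Zi x = z} ∩ {x | Zj x = z'})])) + b3 * (∫ ω, bInd (Di (Zi ω) (Zj ω) ω) * bInd (Dj (Zj ω) (Zi ω) ω) ∂(P[|({x | Zi x = z} ∩ {x | Zj x = z'})])))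
    (hCi : 0 < P ({x | Di true false x = true ∧ Di false true x = false})) (hCj : 0 < P ({x | Dj true false x = true ∧ Dj false true x = false}))
    :
    b0 = (∫ ω, Y false false ω ∂P)
    ∧ b1 = (∫ ω, (Y true false ω - Y false false ω) ∂(P[|{x | Di true false x = true ∧ Di false true x = false}]))
    ∧ b2 = (∫ ω, (Y false true ω - Y false false ω) ∂(P[|{x | Dj true false x = true ∧ Dj false true x = false}])) := by
  have hAmeas : ∀ z z' : Bool, MeasurableSet ({x | Zi x = z} ∩ {x | Zj x = z'}) :=
    fun z z' => (hZi (measurableSet_singleton z)).inter (hZj (measurableSet_singleton z'))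
  have hA0 : ∀ z z' : Bool, P ({x | Zi x = z} ∩ {x | Zj x = z'}) ≠ 0 :=
    fun z z' => (hpos z z').ne'
  -- transfer of independence to composed functions
  have key : ∀ (z z' : Bool)
      (f : ((Bool → Bool → ℝ) × (Bool → Bool → Bool) × (Bool → Bool → Bool)) → ℝ),
      Measurable f →
      Integrable (fun ω => f ((fun d d' => Y d d' ω), (fun a b => Di a b ω),
        (fun a b => Dj a b ω))) P →
      ∫ ω, f ((fun d d' => Y d d' ω), (fun a b => Di a b ω), (fun a b => Dj a b ω))
          ∂(P[|({x | Zi x = z} ∩ {x | Zj x = z'})])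
        = ∫ ω, f ((fun d d' => Y d d' ω), (fun a b => Di a b ω), (fun a b => Dj a b ω)) ∂P := by
    intro z z' f hf hfi
    refine cond_integral_eq_of_indep (hAmeas z z') (hA0 z z') hfi ?_
    have hrepr : ({x | Zi x = z} ∩ {x | Zj x = z'}).indicator (fun _ => (1:ℝ))
        = (fun p : Bool × Bool => if p = (z, z') then (1:ℝ) else 0) ∘ (fun ω => (Zi ω, Zj ω)) := by
      funext ω
      by_cases h1 : Zi ω = z <;> by_cases h2 : Zj ω = z' <;>
        simp [Set.indicator_apply, Set.mem_inter_iff, h1, h2, Prod.ext_iff]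
    rw [hrepr]
    exact hIV.comp hf (measurable_of_countable _)
  -- integrability transfers to conditional measures
  have condInt : ∀ (z z' : Bool) {F : Ω → ℝ}, Integrable F P →
      Integrable F (P[|({x | Zi x = z} ∩ {x | Zj x = z'})]) := by
    intro z z' F hF
    rw [ProbabilityTheory.cond]
    exact hF.restrict.smul_measure (ENNReal.inv_ne_top.2 (hA0 z z'))
  -- a.e. facts under the conditional measure
  have hmem : ∀ z z' : Bool, ∀ᵐ ω ∂(P[|({x | Zi x = z} ∩ {x | Zj x = z'})]),
      Zi ω = z ∧ Zj ω = z' := by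
    intro z z'
    have h : ∀ᵐ ω ∂((P ({x | Zi x = z} ∩ {x | Zj x = z'}))⁻¹ • P.restrict ({x | Zi x = z} ∩ {x | Zj x = z'})), ω ∈ ({x | Zi x = z} ∩ {x | Zj x = z'}) :=
      Measure.ae_smul_measure (ae_restrict_mem (hAmeas z z')) _
    rw [ProbabilityTheory.cond]
    filter_upwards [h] with ω hω
    exact ⟨hω.1, hω.2⟩
  have hosnC : ∀ z z' : Bool, ∀ᵐ ω ∂(P[|({x | Zi x = z} ∩ {x | Zj x = z'})]),
      Di false false ω = false ∧ Di false true ω = false ∧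
      Dj false false ω = false ∧ Dj false true ω = false :=
    fun _ _ => cond_absolutelyContinuous.ae_le hosn
  -- indicator representations
  have hbEq : ∀ (D : Ω → Bool) (g : Ω → ℝ),
      (fun ω => g ω * bInd (D ω)) = ({x | D x = true}).indicator g := by
    intro D g; funext ω
    by_cases h : D ω = true <;> simp [bInd, h, Set.indicator_apply]
  have hbEq1 : ∀ (D : Ω → Bool),
      (fun ω => bInd (D ω)) = ({x | D x = true}).indicator (fun _ => (1:ℝ)) := by
    intro D; funext ω
    by_cases h : D ω = true <;> simp [bInd, h, Set.indicator_apply]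
  have hbInt : ∀ (D : Ω → Bool), Measurable D → Integrable (fun ω => bInd (D ω)) P := by
    intro D hD
    rw [hbEq1]
    exact (integrable_const 1).indicator (hD (measurableSet_singleton true))
  ------------------------------------------------------------------
  -- Case (false, false): identify b0
  ------------------------------------------------------------------
  have Tff1 : ∫ ω, (Y (Di (Zi ω) (Zj ω) ω) (Dj (Zj ω) (Zi ω) ω) ω)
      ∂(P[|({x | Zi x = false} ∩ {x | Zj x = false})]) = ∫ ω, Y false false ω ∂P := by
    have h1 : ∫ ω, (Y (Di (Zi ω) (Zj ω) ω) (Dj (Zj ω) (Zi ω) ω) ω)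
        ∂(P[|({x | Zi x = false} ∩ {x | Zj x = false})])
        = ∫ ω, Y false false ω ∂(P[|({x | Zi x = false} ∩ {x | Zj x = false})]) := by
      refine integral_congr_ae ?_
      filter_upwards [hmem false false, hosnC false false] with ω hz ho
      rw [hz.1, hz.2, ho.1, ho.2.2.1]
    rw [h1]
    exact key false false (fun p => p.1 false false) (by fun_prop) (hYint false false)
  have Tff2 : ∫ ω, bInd (Di (Zi ω) (Zj ω) ω)
      ∂(P[|({x | Zi x = false} ∩ {x | Zj x = false})]) = 0 := by
    have h1 : ∫ ω, bInd (Di (Zi ω) (Zj ω) ω)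
        ∂(P[|({x | Zi x = false} ∩ {x | Zj x = false})])
        = ∫ ω, (0:ℝ) ∂(P[|({x | Zi x = false} ∩ {x | Zj x = false})]) := by
      refine integral_congr_ae ?_
      filter_upwards [hmem false false, hosnC false false] with ω hz ho
      rw [hz.1, hz.2, ho.1]; simp [bInd]
    rw [h1, integral_zero]
  have Tff3 : ∫ ω, bInd (Dj (Zj ω) (Zi ω) ω)
      ∂(P[|({x | Zi x = false} ∩ {x | Zj x = false})]) = 0 := by
    have h1 : ∫ ω, bInd (Dj (Zj ω) (Zi ω) ω)
        ∂(P[|({x | Zi x = false} ∩ {x | Zj x = false})])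
        = ∫ ω, (0:ℝ) ∂(P[|({x | Zi x = false} ∩ {x | Zj x = false})]) := by
      refine integral_congr_ae ?_
      filter_upwards [hmem false false, hosnC false false] with ω hz ho
      rw [hz.1, hz.2, ho.2.2.1]; simp [bInd]
    rw [h1, integral_zero]
  have Tff4 : ∫ ω, bInd (Di (Zi ω) (Zj ω) ω) * bInd (Dj (Zj ω) (Zi ω) ω)
      ∂(P[|({x | Zi x = false} ∩ {x | Zj x = false})]) = 0 := by
    have h1 : ∫ ω, bInd (Di (Zi ω) (Zj ω) ω) * bInd (Dj (Zj ω) (Zi ω) ω)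
        ∂(P[|({x | Zi x = false} ∩ {x | Zj x = false})])
        = ∫ ω, (0:ℝ) ∂(P[|({x | Zi x = false} ∩ {x | Zj x = false})]) := by
      refine integral_congr_ae ?_
      filter_upwards [hmem false false, hosnC false false] with ω hz ho
      rw [hz.1, hz.2, ho.1]; simp [bInd]
    rw [h1, integral_zero]
  have hb0 : b0 = ∫ ω, Y false false ω ∂P := by
    have h := h2sls false false
    rw [Tff1, Tff2, Tff3, Tff4] at h
    simpa using h.symm
  refine ⟨hb0, ?_, ?_⟩
  ------------------------------------------------------------------
  -- Case (true, false): identify b1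
  ------------------------------------------------------------------
  · set Gi : Ω → ℝ := fun ω => (Y true false ω - Y false false ω) * bInd (Di true false ω)
      with hGidef
    have hGiInd : Gi = ({x | Di true false x = true}).indicator
        (fun ω => Y true false ω - Y false false ω) := hbEq _ _
    have hGiInt : Integrable Gi P := by
      rw [hGiInd]
      exact ((hYint true false).sub (hYint false false)).indicator
        (hDimeas true false (measurableSet_singleton true))
    have T1 : ∫ ω, (Y (Di (Zi ω) (Zj ω) ω) (Dj (Zj ω) (Zi ω) ω) ω)
        ∂(P[|({x | Zi x = true} ∩ {x | Zj x = false})])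
        = (∫ ω, Y false false ω ∂P) + ∫ ω, Gi ω ∂P := by
      have h1 : ∫ ω, (Y (Di (Zi ω) (Zj ω) ω) (Dj (Zj ω) (Zi ω) ω) ω)
          ∂(P[|({x | Zi x = true} ∩ {x | Zj x = false})])
          = ∫ ω, (Y false false ω + Gi ω)
              ∂(P[|({x | Zi x = true} ∩ {x | Zj x = false})]) := by
        refine integral_congr_ae ?_
        filter_upwards [hmem true false, hosnC true false] with ω hz ho
        rw [hz.1, hz.2, ho.2.2.2, hGidef]
        cases h : Di true false ω <;> simp [bInd, h] <;> ring
      rw [h1, integral_add (condInt true false (hYint false false)) (condInt true false hGiInt)]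
      have h2 : ∫ ω, Y false false ω ∂(P[|({x | Zi x = true} ∩ {x | Zj x = false})])
          = ∫ ω, Y false false ω ∂P :=
        key true false (fun p => p.1 false false) (by fun_prop) (hYint false false)
      have h3 : ∫ ω, Gi ω ∂(P[|({x | Zi x = true} ∩ {x | Zj x = false})])
          = ∫ ω, Gi ω ∂P :=
        key true false (fun p => (p.1 true false - p.1 false false) * bInd (p.2.1 true false))
          (by fun_prop) hGiInt
      rw [h2, h3]
    have T2 : ∫ ω, bInd (Di (Zi ω) (Zj ω) ω)
        ∂(P[|({x | Zi x = true} ∩ {x | Zj x = false})])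
        = ∫ ω, bInd (Di true false ω) ∂P := by
      have h1 : ∫ ω, bInd (Di (Zi ω) (Zj ω) ω)
          ∂(P[|({x | Zi x = true} ∩ {x | Zj x = false})])
          = ∫ ω, bInd (Di true false ω)
              ∂(P[|({x | Zi x = true} ∩ {x | Zj x = false})]) := by
        refine integral_congr_ae ?_
        filter_upwards [hmem true false] with ω hz
        rw [hz.1, hz.2]
      rw [h1]
      exact key true false (fun p => bInd (p.2.1 true false)) (by fun_prop)
        (hbInt _ (hDimeas true false))
    have T3 : ∫ ω, bInd (Dj (Zj ω) (Zi ω) ω)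
        ∂(P[|({x | Zi x = true} ∩ {x | Zj x = false})]) = 0 := by
      have h1 : ∫ ω, bInd (Dj (Zj ω) (Zi ω) ω)
          ∂(P[|({x | Zi x = true} ∩ {x | Zj x = false})])
          = ∫ ω, (0:ℝ) ∂(P[|({x | Zi x = true} ∩ {x | Zj x = false})]) := by
        refine integral_congr_ae ?_
        filter_upwards [hmem true false, hosnC true false] with ω hz ho
        rw [hz.1, hz.2, ho.2.2.2]; simp [bInd]
      rw [h1, integral_zero]
    have T4 : ∫ ω, bInd (Di (Zi ω) (Zj ω) ω) * bInd (Dj (Zj ω) (Zi ω) ω)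
        ∂(P[|({x | Zi x = true} ∩ {x | Zj x = false})]) = 0 := by
      have h1 : ∫ ω, bInd (Di (Zi ω) (Zj ω) ω) * bInd (Dj (Zj ω) (Zi ω) ω)
          ∂(P[|({x | Zi x = true} ∩ {x | Zj x = false})])
          = ∫ ω, (0:ℝ) ∂(P[|({x | Zi x = true} ∩ {x | Zj x = false})]) := by
        refine integral_congr_ae ?_
        filter_upwards [hmem true false, hosnC true false] with ω hz ho
        rw [hz.1, hz.2, ho.2.2.2]; simp [bInd]
      rw [h1, integral_zero]
    have hmain : ∫ ω, Gi ω ∂P = b1 * ∫ ω, bInd (Di true false ω) ∂P := by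
      have h := h2sls true false
      rw [T1, T2, T3, T4, ← hb0] at h
      linarith
    -- compute q and relate the complier set to {Di true false = true}
    have hq : ∫ ω, bInd (Di true false ω) ∂P
        = (P {x | Di true false x = true}).toReal := by
      rw [hbEq1]
      rw [integral_indicator_const (1:ℝ) (s := {x | Di true false x = true}) (hDimeas true false (measurableSet_singleton true))]
      simp [Measure.real_def]
    have hST : ({x | Di true false x = true ∧ Di false true x = false} : Set Ω)
        =ᵐ[P] ({x | Di true false x = true} : Set Ω) := by
      rw [Filter.eventuallyEq_set]
      filter_upwards [hosn] with ω ho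
      simp [Set.mem_setOf_eq, ho.2.1]
    have hPS : P {x | Di true false x = true ∧ Di false true x = false}
        = P {x | Di true false x = true} := measure_congr hST
    have hq0 : (P {x | Di true false x = true}).toReal ≠ 0 := by
      rw [← hPS]
      simp [ENNReal.toReal_ne_zero, hCi.ne', measure_ne_top]
    have hTmeas : MeasurableSet ({x | Di true false x = true} : Set Ω) :=
      hDimeas true false (measurableSet_singleton true)
    have hGT : ∫ ω, Gi ω ∂P
        = ∫ ω in {x | Di true false x = true}, (Y true false ω - Y false false ω) ∂P := by
      rw [hGiInd, integral_indicator hTmeas]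
    rw [ProbabilityTheory.cond, integral_smul_measure,
      Measure.restrict_congr_set hST, hPS]
    have : ∫ ω, (Y true false ω - Y false false ω)
        ∂(P.restrict {x | Di true false x = true}) = ∫ ω, Gi ω ∂P := hGT.symm
    rw [this, hmain, hq, ENNReal.toReal_inv, smul_eq_mul]
    field_simp
  ------------------------------------------------------------------
  -- Case (false, true): identify b2
  ------------------------------------------------------------------
  · set Gj : Ω → ℝ := fun ω => (Y false true ω - Y false false ω) * bInd (Dj true false ω)
      with hGjdef
    have hGjInd : Gj = ({x | Dj true false x = true}).indicator
        (fun ω => Y false true ω - Y false false ω) := hbEq _ _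
    have hGjInt : Integrable Gj P := by
      rw [hGjInd]
      exact ((hYint false true).sub (hYint false false)).indicator
        (hDjmeas true false (measurableSet_singleton true))
    have T1 : ∫ ω, (Y (Di (Zi ω) (Zj ω) ω) (Dj (Zj ω) (Zi ω) ω) ω)
        ∂(P[|({x | Zi x = false} ∩ {x | Zj x = true})])
        = (∫ ω, Y false false ω ∂P) + ∫ ω, Gj ω ∂P := by
      have h1 : ∫ ω, (Y (Di (Zi ω) (Zj ω) ω) (Dj (Zj ω) (Zi ω) ω) ω)
          ∂(P[|({x | Zi x = false} ∩ {x | Zj x = true})])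
          = ∫ ω, (Y false false ω + Gj ω)
              ∂(P[|({x | Zi x = false} ∩ {x | Zj x = true})]) := by
        refine integral_congr_ae ?_
        filter_upwards [hmem false true, hosnC false true] with ω hz ho
        rw [hz.1, hz.2, ho.2.1, hGjdef]
        cases h : Dj true false ω <;> simp [bInd, h] <;> ring
      rw [h1, integral_add (condInt false true (hYint false false)) (condInt false true hGjInt)]
      have h2 : ∫ ω, Y false false ω ∂(P[|({x | Zi x = false} ∩ {x | Zj x = true})])
          = ∫ ω, Y false false ω ∂P :=
        key false true (fun p => p.1 false false) (by fun_prop) (hYint false false)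
      have h3 : ∫ ω, Gj ω ∂(P[|({x | Zi x = false} ∩ {x | Zj x = true})])
          = ∫ ω, Gj ω ∂P :=
        key false true (fun p => (p.1 false true - p.1 false false) * bInd (p.2.2 true false))
          (by fun_prop) hGjInt
      rw [h2, h3]
    have T2 : ∫ ω, bInd (Di (Zi ω) (Zj ω) ω)
        ∂(P[|({x | Zi x = false} ∩ {x | Zj x = true})]) = 0 := by
      have h1 : ∫ ω, bInd (Di (Zi ω) (Zj ω) ω)
          ∂(P[|({x | Zi x = false} ∩ {x | Zj x = true})])
          = ∫ ω, (0:ℝ) ∂(P[|({x | Zi x = false} ∩ {x | Zj x = true})]) := by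
        refine integral_congr_ae ?_
        filter_upwards [hmem false true, hosnC false true] with ω hz ho
        rw [hz.1, hz.2, ho.2.1]; simp [bInd]
      rw [h1, integral_zero]
    have T3 : ∫ ω, bInd (Dj (Zj ω) (Zi ω) ω)
        ∂(P[|({x | Zi x = false} ∩ {x | Zj x = true})])
        = ∫ ω, bInd (Dj true false ω) ∂P := by
      have h1 : ∫ ω, bInd (Dj (Zj ω) (Zi ω) ω)
          ∂(P[|({x | Zi x = false} ∩ {x | Zj x = true})])
          = ∫ ω, bInd (Dj true false ω)
              ∂(P[|({x | Zi x = false} ∩ {x | Zj x = true})]) := by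
        refine integral_congr_ae ?_
        filter_upwards [hmem false true] with ω hz
        rw [hz.1, hz.2]
      rw [h1]
      exact key false true (fun p => bInd (p.2.2 true false)) (by fun_prop)
        (hbInt _ (hDjmeas true false))
    have T4 : ∫ ω, bInd (Di (Zi ω) (Zj ω) ω) * bInd (Dj (Zj ω) (Zi ω) ω)
        ∂(P[|({x | Zi x = false} ∩ {x | Zj x = true})]) = 0 := by
      have h1 : ∫ ω, bInd (Di (Zi ω) (Zj ω) ω) * bInd (Dj (Zj ω) (Zi ω) ω)
          ∂(P[|({x | Zi x = false} ∩ {x | Zj x = true})])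
          = ∫ ω, (0:ℝ) ∂(P[|({x | Zi x = false} ∩ {x | Zj x = true})]) := by
        refine integral_congr_ae ?_
        filter_upwards [hmem false true, hosnC false true] with ω hz ho
        rw [hz.1, hz.2, ho.2.1]; simp [bInd]
      rw [h1, integral_zero]
    have hmain : ∫ ω, Gj ω ∂P = b2 * ∫ ω, bInd (Dj true false ω) ∂P := by
      have h := h2sls false true
      rw [T1, T2, T3, T4, ← hb0] at h
      linarith
    have hq : ∫ ω, bInd (Dj true false ω) ∂P
        = (P {x | Dj true false x = true}).toReal := by
      rw [hbEq1]
      rw [integral_indicator_const (1:ℝ) (s := {x | Dj true false x = true}) (hDjmeas true false (measurableSet_singleton true))]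
      simp [Measure.real_def]
    have hST : ({x | Dj true false x = true ∧ Dj false true x = false} : Set Ω)
        =ᵐ[P] ({x | Dj true false x = true} : Set Ω) := by
      rw [Filter.eventuallyEq_set]
      filter_upwards [hosn] with ω ho
      simp [Set.mem_setOf_eq, ho.2.2.2]
    have hPS : P {x | Dj true false x = true ∧ Dj false true x = false}
        = P {x | Dj true false x = true} := measure_congr hST
    have hq0 : (P {x | Dj true false x = true}).toReal ≠ 0 := by
      rw [← hPS]
      simp [ENNReal.toReal_ne_zero, hCj.ne', measure_ne_top]
    have hTmeas : MeasurableSet ({x | Dj true false x = true} : Set Ω) :=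
      hDjmeas true false (measurableSet_singleton true)
    have hGT : ∫ ω, Gj ω ∂P
        = ∫ ω in {x | Dj true false x = true}, (Y false true ω - Y false false ω) ∂P := by
      rw [hGjInd, integral_indicator hTmeas]
    rw [ProbabilityTheory.cond, integral_smul_measure,
      Measure.restrict_congr_set hST, hPS]
    have : ∫ ω, (Y false true ω - Y false false ω)
        ∂(P.restrict {x | Dj true false x = true}) = ∫ ω, Gj ω ∂P := hGT.symm
    rw [this, hmain, hq, ENNReal.toReal_inv, smul_eq_mul]
    field_simp
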